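/- Let n ≥ 3, let a regular n-gon have center c₁, circumradius R₁ > 0, orientation α, and let M be a point with L₁ = |M − c₁| satisfying 0 < L₁ and L₁ ≠ R₁ (M is neither the center nor on the circumcircle). Then there exist a center c₂ and orientation β such that the regular n-gon with center c₂, circumradius L₁ and orientation β satisfies |M − c₂| = R₁, and the multiset of distances from M to its vertices equals the multiset of distances from M to the vertices of the original n-gon; since L₁ ≠ R₁ this second regular n-gon is not congruent to the first. -/

import Mathlib

open Complex Real Finset

theorem exists_second_regular_polygon (n : ℕ) (hn : 3 ≤ n)
    (c₁ M : ℂ) (R₁ α : ℝ) (hR₁ : 0 < R₁)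
    (L₁ : ℝ) (hL₁ : L₁ = Norm.norm (M - c₁)) (hL₁pos : 0 < L₁) (hne : L₁ ≠ R₁) :
    ∃ (c₂ : ℂ) (β : ℝ),
      Norm.norm (M - c₂) = R₁
        ∧ (Finset.range n).val.map
            (fun k => Norm.norm (M - (c₂ + L₁ * Complex.exp (Complex.I * ((2 * π * k / n + β : ℝ) : ℂ)))))
          = (Finset.range n).val.map
              (fun k => Norm.norm (M - (c₁ + R₁ * Complex.exp (Complex.I * ((2 * π * k / n + α : ℝ) : ℂ))))) := by
  have hL₁0 : L₁ ≠ 0 := ne_of_gt hL₁pos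
  set w : ℂ := M - c₁ with hw
  have habs : Norm.norm w = L₁ := hL₁.symm
  refine ⟨M - (↑(R₁ / L₁) : ℂ) * w, α, ?_, ?_⟩
  · have : M - (M - (↑(R₁ / L₁) : ℂ) * w) = (↑(R₁ / L₁) : ℂ) * w := by ring
    rw [this, norm_mul, Complex.norm_real, Real.norm_eq_abs, habs, abs_of_pos (div_pos hR₁ hL₁pos)]
    field_simp
  · apply Multiset.map_congr rfl
    intro k hk
    set e : ℂ := Complex.exp (Complex.I * ((2 * π * k / n + α : ℝ) : ℂ)) with he
    have he1 : Complex.normSq e = 1 := by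
      have h : Norm.norm e = 1 := by
        rw [he, Complex.norm_exp]
        simp [Complex.mul_re]
      have := Complex.sq_norm e
      rw [h] at this
      simpa using this.symm
    have hwn : Complex.normSq w = L₁ ^ 2 := by
      have := Complex.sq_norm w
      rw [habs] at this
      linarith
    rw [Complex.norm_def, Complex.norm_def]
    congr 1
    rw [show M - (M - (↑(R₁ / L₁) : ℂ) * w + ↑L₁ * e) = (↑(R₁ / L₁) : ℂ) * w - ↑L₁ * e by ring,
        show M - (c₁ + ↑R₁ * e) = w - ↑R₁ * e by rw [hw]; ring]
    rw [Complex.normSq_sub, Complex.normSq_sub]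
    have h1 : ((↑(R₁ / L₁) : ℂ) * w) * (starRingEnd ℂ) ((↑L₁ : ℂ) * e)
        = (↑(R₁ / L₁ * L₁) : ℂ) * (w * (starRingEnd ℂ) e) := by
      rw [map_mul, Complex.conj_ofReal]
      push_cast
      ring
    have h2 : w * (starRingEnd ℂ) ((↑R₁ : ℂ) * e) = (↑R₁ : ℂ) * (w * (starRingEnd ℂ) e) := by
      rw [map_mul, Complex.conj_ofReal]; ring
    rw [h1, h2, Complex.re_ofReal_mul, Complex.re_ofReal_mul,
        Complex.normSq_mul, Complex.normSq_mul, Complex.normSq_mul,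
        Complex.normSq_ofReal, Complex.normSq_ofReal, Complex.normSq_ofReal, hwn, he1]
    field_simp
    ring
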